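/- Let A be an abelian group and let X, Y be finite multisets of finite sequences over A (possibly X = Y) such that f_γ^r(X) = f_γ^r(Y) for every r ≥ 0 and every γ ∈ A. Then for all α, β ∈ A, every r ≥ 0, and every γ ∈ A: (1) f_γ^r(R_{α,β}(X)) = f_γ^r(R_{α,β}(Y)), and (2) f_γ^r(R_{α,β}(X)) = f_γ^r(R_{β,α}(Y)). -/

import Mathlib

/-- The map `R_{α,β,i}` (for `1 ≤ i ≤ l`) sending `(x_1, …, x_l)` to the sequence of length
`l+2` consisting of `x_i`, then `x_1, …, x_i` each increased by `x_i - x_1 + α`, then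
`x_i, …, x_l` each increased by `x_i - x_1 + β`. -/
def Rmap {A : Type*} [AddCommGroup A] (α β : A) (i : ℕ) (u : List A) : List A :=
  u.getD (i - 1) 0 ::
    ((u.take i).map (fun y => y + (u.getD (i - 1) 0 - u.getD 0 0 + α)) ++
     (u.drop (i - 1)).map (fun y => y + (u.getD (i - 1) 0 - u.getD 0 0 + β)))

/-- The multiset `R_{α,β}(u) = {R_{α,β,i}(u) : 1 ≤ i ≤ l}` of `l` sequences of length `l+2`. -/
def RMulti {A : Type*} [AddCommGroup A] (α β : A) (u : List A) : Multiset (List A) :=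
  (Finset.range u.length).val.map fun i => Rmap α β (i + 1) u

/-- `fStat γ r u` is the multiset `f_γ^r(u) = {x_{a_1} + ⋯ + x_{a_r} - (r-1)·x_1 + γ}` over all
weakly increasing `r`-tuples `1 ≤ a_1 ≤ ⋯ ≤ a_r ≤ l` (equivalently, all size-`r` multisets of
indices), counted with multiplicity. -/
def fStat {A : Type*} [AddCommGroup A] (γ : A) (r : ℕ) (u : List A) : Multiset A :=
  ((Finset.range u.length).sym r).val.map fun m =>
    (m.toMultiset.map fun i => u.getD i 0).sum - ((r : ℤ) - 1) • u.getD 0 0 + γ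

section Aux

variable {A : Type*} [AddCommGroup A]

/-- Finset of multisets of size `n` with elements in `s`. -/
def mySym (s : Finset ℕ) (n : ℕ) : Finset (Multiset ℕ) :=
  (s.sym n).map ⟨Sym.toMultiset, Sym.coe_injective⟩

lemma mem_mySym {s : Finset ℕ} {n : ℕ} {M : Multiset ℕ} :
    M ∈ mySym s n ↔ Multiset.card M = n ∧ ∀ a ∈ M, a ∈ s := by
  constructor
  · intro hM
    rw [mySym, Finset.mem_map] at hM
    obtain ⟨m, hm, rfl⟩ := hM
    exact ⟨m.2, fun a ha => Finset.mem_sym_iff.1 hm a ha⟩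
  · rintro ⟨hc, hs⟩
    rw [mySym, Finset.mem_map]
    exact ⟨⟨M, hc⟩, Finset.mem_sym_iff.2 (fun a ha => hs a ha), rfl⟩

lemma val_map_eq_sum {ι B : Type*} (s : Finset ι) (g : ι → B) :
    s.val.map g = ∑ x ∈ s, ({g x} : Multiset B) := by
  show _ = (s.val.map (fun x => ({g x} : Multiset B))).sum
  rw [show (fun x => ({g x} : Multiset B)) = (fun b => ({b} : Multiset B)) ∘ g from rfl,
    ← Multiset.map_map, Multiset.sum_map_singleton]

lemma multiset_bind_eq_sum {B C : Type*} (m : Multiset B) (f : B → Multiset C) :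
    m.bind f = (m.map f).sum := rfl

lemma bind_val_map_eq_sum {ι B C : Type*} (s : Finset ι) (h : ι → B) (f : B → Multiset C) :
    (s.val.map h).bind f = ∑ i ∈ s, f (h i) := by
  rw [multiset_bind_eq_sum, Multiset.map_map]
  rfl

lemma fStat_eq_sum (γ : A) (s : ℕ) (u : List A) :
    fStat γ s u = ∑ M ∈ mySym (Finset.range u.length) s,
      ({(M.map fun i => u.getD i 0).sum - ((s : ℤ) - 1) • u.getD 0 0 + γ} : Multiset A) := by
  rw [fStat, mySym, Finset.sum_map, ← val_map_eq_sum]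
  rfl

/-- Index set for the decomposition: pairs `(a, b)` with `a + b ≤ r`. -/
def Sset (r : ℕ) : Finset (ℕ × ℕ) :=
  (Finset.range (r + 1) ×ˢ Finset.range (r + 1)).filter (fun p => p.1 + p.2 ≤ r)

lemma mem_Sset {r : ℕ} {p : ℕ × ℕ} : p ∈ Sset r ↔ p.1 + p.2 ≤ r := by
  simp only [Sset, Finset.mem_filter, Finset.mem_product, Finset.mem_range]
  omega


lemma getD_map' {B C : Type*} (f : B → C) (l : List B) {n : ℕ} (h : n < l.length)
    (d : B) (d' : C) : (l.map f).getD n d' = f (l.getD n d) := by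
  rw [List.getD_eq_getElem _ _ (by simpa using h), List.getD_eq_getElem _ _ h,
    List.getElem_map]

lemma getD_take' {B : Type*} (l : List B) {n m : ℕ} (h : n < m) (h2 : n < l.length) (d : B) :
    (l.take m).getD n d = l.getD n d := by
  rw [List.getD_eq_getElem _ _ (by rw [List.length_take]; omega),
    List.getD_eq_getElem _ _ h2, List.getElem_take]

lemma getD_drop' {B : Type*} (l : List B) {n m : ℕ} (h : m + n < l.length) (d : B) :
    (l.drop m).getD n d = l.getD (m + n) d := by
  rw [List.getD_eq_getElem _ _ (by rw [List.length_drop]; omega),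
    List.getD_eq_getElem _ _ h, List.getElem_drop]

lemma Rmap_length (α β : A) {i : ℕ} {u : List A} (hi : i < u.length) :
    (Rmap α β (i + 1) u).length = u.length + 2 := by
  simp only [Rmap, List.length_cons, List.length_append, List.length_map, List.length_take,
    List.length_drop]
  omega

lemma Rmap_getD_zero (α β : A) (i : ℕ) (u : List A) :
    (Rmap α β (i + 1) u).getD 0 0 = u.getD i 0 := by
  simp [Rmap]

lemma Rmap_getD_lo (α β : A) {i c : ℕ} {u : List A} (hi : i < u.length)
    (hc : 0 < c) (hci : c < i + 2) :
    (Rmap α β (i + 1) u).getD c 0 =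
      u.getD (c - 1) 0 + (u.getD i 0 - u.getD 0 0 + α) := by
  obtain ⟨c', rfl⟩ : ∃ c', c = c' + 1 := ⟨c - 1, by omega⟩
  simp only [Rmap, Nat.add_sub_cancel, List.getD_cons_succ]
  rw [List.getD_append _ _ _ _ (by rw [List.length_map, List.length_take]; omega)]
  rw [getD_map' _ _ (by rw [List.length_take]; omega) 0]
  rw [getD_take' _ (show c' < i + 1 by omega) (show c' < u.length by omega)]

lemma Rmap_getD_hi (α β : A) {i c : ℕ} {u : List A} (hi : i < u.length)
    (hc : i + 2 ≤ c) (hcl : c < u.length + 2) :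
    (Rmap α β (i + 1) u).getD c 0 =
      u.getD (c - 2) 0 + (u.getD i 0 - u.getD 0 0 + β) := by
  obtain ⟨c', rfl⟩ : ∃ c', c = c' + 1 := ⟨c - 1, by omega⟩
  simp only [Rmap, Nat.add_sub_cancel, List.getD_cons_succ]
  rw [List.getD_append_right _ _ _ _ (by rw [List.length_map, List.length_take]; omega)]
  rw [List.length_map, List.length_take]
  rw [show min (i + 1) u.length = i + 1 by omega]
  rw [getD_map' _ _ (show c' - (i + 1) < (u.drop i).length by rw [List.length_drop]; omega) 0]
  rw [getD_drop' _ (show i + (c' - (i + 1)) < u.length by omega)]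
  rw [show i + (c' - (i + 1)) = c' + 1 - 2 by omega]

lemma sorted_decomp (i : ℕ) (J K : Multiset ℕ) (hJ : ∀ j ∈ J, j ≤ i) (hK : ∀ k ∈ K, i ≤ k) :
    (i ::ₘ (J + K)).sort (· ≤ ·) =
      J.sort (· ≤ ·) ++ i :: K.sort (· ≤ ·) := by
  refine List.Perm.eq_of_pairwise' (Multiset.pairwise_sort _ _) ?_ ?_
  swap
  · rw [← Multiset.coe_eq_coe, Multiset.sort_eq, ← Multiset.coe_add, ← Multiset.cons_coe,
      Multiset.sort_eq, Multiset.sort_eq, Multiset.add_cons]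
  · rw [List.pairwise_append]
    refine ⟨Multiset.pairwise_sort _ _, List.pairwise_cons.2 ⟨?_, Multiset.pairwise_sort _ _⟩, ?_⟩
    · intro b hb; exact hK b ((Multiset.mem_sort _).1 hb)
    · intro a ha b hb
      have ha' := hJ a ((Multiset.mem_sort _).1 ha)
      rcases List.mem_cons.1 hb with rfl | hb'
      · exact ha'
      · exact ha'.trans (hK b ((Multiset.mem_sort _).1 hb'))

/-- Forward map of the bijection. -/
def fwd (q : (_ : ℕ) × Multiset ℕ) : (_ : ℕ × ℕ) × Multiset ℕ :=
  ⟨(Multiset.card ((q.2.filter (fun c => 0 < c ∧ c < q.1 + 2)).map (· - 1)),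
    Multiset.card ((q.2.filter (fun c => q.1 + 2 ≤ c)).map (· - 2))),
   q.1 ::ₘ ((q.2.filter (fun c => 0 < c ∧ c < q.1 + 2)).map (· - 1)
     + (q.2.filter (fun c => q.1 + 2 ≤ c)).map (· - 2))⟩

/-- Backward map of the bijection. -/
def bwd (r : ℕ) (q : (_ : ℕ × ℕ) × Multiset ℕ) : (_ : ℕ) × Multiset ℕ :=
  ⟨(q.2.sort (· ≤ ·)).getD q.1.1 0,
    Multiset.replicate (r - (q.1.1 + q.1.2)) 0
      + (↑(((q.2.sort (· ≤ ·)).take q.1.1).map (· + 1)) : Multiset ℕ)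
      + (↑(((q.2.sort (· ≤ ·)).drop (q.1.1 + 1)).map (· + 2)) : Multiset ℕ)⟩

/-- The value of the statistic at `(i, m)` on the left-hand side. -/
def Fval (α β γ : A) (r : ℕ) (u : List A) (q : (_ : ℕ) × Multiset ℕ) : A :=
  (q.2.map fun c => (Rmap α β (q.1 + 1) u).getD c 0).sum
    - ((r : ℤ) - 1) • (Rmap α β (q.1 + 1) u).getD 0 0 + γ

/-- The value of the statistic at `((a,b), M)` on the right-hand side. -/
def Gval (α β γ : A) (u : List A) (q : (_ : ℕ × ℕ) × Multiset ℕ) : A :=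
  (q.2.map fun i => u.getD i 0).sum
    - (((q.1.1 + q.1.2 + 1 : ℕ) : ℤ) - 1) • u.getD 0 0 + (γ + q.1.1 • α + q.1.2 • β)

lemma sigma_mk_eq {I T : Type*} {a b : I} {x y : T} (h1 : a = b) (h2 : x = y) :
    (⟨a, x⟩ : (_ : I) × T) = ⟨b, y⟩ := by subst h1; subst h2; rfl

lemma msplit (i : ℕ) (m : Multiset ℕ) :
    m.filter (fun c => 0 < c ∧ c < i + 2) + (m.filter (fun c => i + 2 ≤ c)
      + m.filter (fun c => c = 0)) = m := by
  conv_rhs => rw [← Multiset.filter_add_not (fun c => 0 < c ∧ c < i + 2) m]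
  congr 1
  conv_rhs => rw [← Multiset.filter_add_not (fun c => i + 2 ≤ c)
    (m.filter (fun c => ¬(0 < c ∧ c < i + 2)))]
  rw [Multiset.filter_filter, Multiset.filter_filter]
  congr 1
  · exact Multiset.filter_congr (fun c _ => by omega)
  · exact Multiset.filter_congr (fun c _ => by omega)

lemma sum_map_add_const {B : Type*} [AddCommMonoid B] (s : Multiset ℕ) (g : ℕ → B) (e : B) :
    (s.map (fun c => g c + e)).sum = (s.map g).sum + (Multiset.card s) • e := by
  rw [Multiset.sum_map_add]
  congr 1
  rw [Multiset.map_const', Multiset.sum_replicate]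

lemma sorted_getElem_le {L : List ℕ} (hL : L.Pairwise (· ≤ ·)) {k j : ℕ} (hk : k ≤ j)
    (hj : j < L.length) : L[k]'(lt_of_le_of_lt hk hj) ≤ L[j] := by
  rcases eq_or_lt_of_le hk with rfl | h
  · exact le_rfl
  · have := hL.rel_get_of_lt (a := ⟨k, lt_of_le_of_lt hk hj⟩) (b := ⟨j, hj⟩) h
    simpa [List.get_eq_getElem] using this

lemma mem_take_le' {L : List ℕ} (hL : L.Pairwise (· ≤ ·)) {a : ℕ} (ha : a < L.length) :
    ∀ e ∈ L.take a, e ≤ L[a] := by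
  intro e he
  rw [List.mem_iff_getElem] at he
  obtain ⟨k, hk, rfl⟩ := he
  have hk' : k < a := by rw [List.length_take] at hk; omega
  rw [List.getElem_take]
  exact sorted_getElem_le hL (le_of_lt hk') ha

lemma mem_drop_ge' {L : List ℕ} (hL : L.Pairwise (· ≤ ·)) {a : ℕ} (ha : a < L.length) :
    ∀ e ∈ L.drop (a + 1), L[a] ≤ e := by
  intro e he
  rw [List.mem_iff_getElem] at he
  obtain ⟨k, hk, rfl⟩ := he
  rw [List.getElem_drop]
  exact sorted_getElem_le hL (by omega) (by rw [List.length_drop] at hk; omega)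

lemma key (α β γ : A) (r : ℕ) (u : List A) :
    (RMulti α β u).bind (fStat γ r) =
      ∑ p ∈ Sset r, fStat (γ + p.1 • α + p.2 • β) (p.1 + p.2 + 1) u := by
  classical
  calc (RMulti α β u).bind (fStat γ r)
      = ∑ i ∈ Finset.range u.length, fStat γ r (Rmap α β (i + 1) u) := by
        rw [RMulti, bind_val_map_eq_sum]
    _ = ∑ i ∈ Finset.range u.length, ∑ M ∈ mySym (Finset.range (u.length + 2)) r,
          ({Fval α β γ r u ⟨i, M⟩} : Multiset A) := by
        refine Finset.sum_congr rfl fun i hi => ?_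
        rw [fStat_eq_sum, Rmap_length α β (Finset.mem_range.1 hi)]
        rfl
    _ = ∑ q ∈ (Finset.range u.length).sigma
          (fun _ => mySym (Finset.range (u.length + 2)) r),
          ({Fval α β γ r u q} : Multiset A) := by
        rw [Finset.sum_sigma]
    _ = ∑ q ∈ (Sset r).sigma (fun p => mySym (Finset.range u.length) (p.1 + p.2 + 1)),
          ({Gval α β γ u q} : Multiset A) := ?_
    _ = ∑ p ∈ Sset r, ∑ M ∈ mySym (Finset.range u.length) (p.1 + p.2 + 1),
          ({Gval α β γ u ⟨p, M⟩} : Multiset A) := by rw [Finset.sum_sigma]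
    _ = ∑ p ∈ Sset r, fStat (γ + p.1 • α + p.2 • β) (p.1 + p.2 + 1) u := by
        refine Finset.sum_congr rfl fun p hp => ?_
        rw [fStat_eq_sum]
        rfl
  -- It remains to prove the bijection step.
  have hfwd : ∀ q ∈ (Finset.range u.length).sigma
      (fun _ => mySym (Finset.range (u.length + 2)) r),
      fwd q ∈ (Sset r).sigma (fun p => mySym (Finset.range u.length) (p.1 + p.2 + 1)) := by
    rintro ⟨i, m⟩ hq
    simp only [Finset.mem_sigma, Finset.mem_range, mem_mySym] at hq
    obtain ⟨hi, hcard, hmem⟩ := hq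
    have hmlt : ∀ c ∈ m, c < u.length + 2 := hmem
    have hr : Multiset.card (m.filter (fun c => 0 < c ∧ c < i + 2))
        + (Multiset.card (m.filter (fun c => i + 2 ≤ c))
        + Multiset.card (m.filter (fun c => c = 0))) = r := by
      rw [← Multiset.card_add, ← Multiset.card_add, msplit, hcard]
    rw [Finset.mem_sigma]
    constructor
    · rw [mem_Sset]
      simp only [fwd, Multiset.card_map]
      omega
    · rw [mem_mySym]
      simp only [fwd, Multiset.card_cons, Multiset.card_add, Multiset.card_map]
      constructor
      · trivial
      · intro c hc
        rw [Finset.mem_range]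
        rcases Multiset.mem_cons.1 hc with rfl | hc'
        · exact hi
        rcases Multiset.mem_add.1 hc' with hc1 | hc2
        · obtain ⟨d, hd, rfl⟩ := Multiset.mem_map.1 hc1
          rw [Multiset.mem_filter] at hd
          omega
        · obtain ⟨d, hd, rfl⟩ := Multiset.mem_map.1 hc2
          rw [Multiset.mem_filter] at hd
          have := hmlt d hd.1
          omega
  have hbwd : ∀ q ∈ (Sset r).sigma (fun p => mySym (Finset.range u.length) (p.1 + p.2 + 1)),
      bwd r q ∈ (Finset.range u.length).sigma
        (fun _ => mySym (Finset.range (u.length + 2)) r) := by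
    rintro ⟨⟨a, b⟩, M⟩ hq
    simp only [Finset.mem_sigma, mem_Sset, mem_mySym, Finset.mem_range] at hq
    obtain ⟨hab, hcard, hmem⟩ := hq
    have hlen : (M.sort (· ≤ ·)).length = a + b + 1 := by
      rw [Multiset.length_sort, hcard]
    have halen : a < (M.sort (· ≤ ·)).length := by omega
    rw [Finset.mem_sigma]
    constructor
    · simp only [bwd]
      rw [Finset.mem_range, List.getD_eq_getElem _ _ halen]
      exact hmem _ ((Multiset.mem_sort _).1 (List.getElem_mem _))
    · simp only [bwd]
      rw [mem_mySym]
      constructor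
      · simp only [Multiset.card_add, Multiset.card_replicate, Multiset.coe_card,
          List.length_map, List.length_take, List.length_drop, hlen]
        rw [inf_eq_left.2 (show a ≤ a + b + 1 by omega)]
        omega
      · intro c hc
        rw [Finset.mem_range]
        rcases Multiset.mem_add.1 hc with hc' | hc2
        · rcases Multiset.mem_add.1 hc' with hc0 | hc1
          · rw [Multiset.eq_of_mem_replicate hc0]; omega
          · rw [Multiset.mem_coe, List.mem_map] at hc1
            obtain ⟨e, he, rfl⟩ := hc1
            have heM : e ∈ M := (Multiset.mem_sort _).1 (List.mem_of_mem_take he)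
            have := hmem e heM
            omega
        · rw [Multiset.mem_coe, List.mem_map] at hc2
          obtain ⟨e, he, rfl⟩ := hc2
          have heM : e ∈ M := (Multiset.mem_sort _).1 (List.mem_of_mem_drop he)
          have := hmem e heM
          omega
  have hleft : ∀ q ∈ (Finset.range u.length).sigma
      (fun _ => mySym (Finset.range (u.length + 2)) r), bwd r (fwd q) = q := by
    rintro ⟨i, m⟩ hq
    simp only [Finset.mem_sigma, Finset.mem_range, mem_mySym] at hq
    obtain ⟨hi, hcard, hmem⟩ := hq
    have hJ : ∀ j ∈ (m.filter (fun c => 0 < c ∧ c < i + 2)).map (· - 1), j ≤ i := by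
      intro j hj
      obtain ⟨c, hc, rfl⟩ := Multiset.mem_map.1 hj
      rw [Multiset.mem_filter] at hc
      omega
    have hK : ∀ k ∈ (m.filter (fun c => i + 2 ≤ c)).map (· - 2), i ≤ k := by
      intro k hk
      obtain ⟨c, hc, rfl⟩ := Multiset.mem_map.1 hk
      rw [Multiset.mem_filter] at hc
      omega
    have hsort := sorted_decomp i _ _ hJ hK
    have hJslen : (((m.filter (fun c => 0 < c ∧ c < i + 2)).map (· - 1)).sort (· ≤ ·)).length
        = Multiset.card (m.filter (fun c => 0 < c ∧ c < i + 2)) := by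
      rw [Multiset.length_sort, Multiset.card_map]
    have hr : Multiset.card (m.filter (fun c => 0 < c ∧ c < i + 2))
        + (Multiset.card (m.filter (fun c => i + 2 ≤ c))
        + Multiset.card (m.filter (fun c => c = 0))) = r := by
      rw [← Multiset.card_add, ← Multiset.card_add, msplit, hcard]
    simp only [fwd, bwd, Multiset.card_map]
    refine sigma_mk_eq ?_ ?_
    · rw [hsort, List.getD_append_right _ _ _ _ (le_of_eq hJslen)]
      rw [hJslen, Nat.sub_self]
      rfl
    · rw [hsort]
      have h1 : ((((m.filter (fun c => 0 < c ∧ c < i + 2)).map (· - 1)).sort (· ≤ ·))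
            ++ i :: (((m.filter (fun c => i + 2 ≤ c)).map (· - 2)).sort (· ≤ ·))).take
            (Multiset.card (m.filter (fun c => 0 < c ∧ c < i + 2)))
          = (((m.filter (fun c => 0 < c ∧ c < i + 2)).map (· - 1)).sort (· ≤ ·)) :=
        List.take_left' hJslen
      have h2 : ((((m.filter (fun c => 0 < c ∧ c < i + 2)).map (· - 1)).sort (· ≤ ·))
            ++ i :: (((m.filter (fun c => i + 2 ≤ c)).map (· - 2)).sort (· ≤ ·))).drop
            (Multiset.card (m.filter (fun c => 0 < c ∧ c < i + 2)) + 1)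
          = (((m.filter (fun c => i + 2 ≤ c)).map (· - 2)).sort (· ≤ ·)) := by
        rw [show Multiset.card (m.filter (fun c => 0 < c ∧ c < i + 2)) + 1
            = ((((m.filter (fun c => 0 < c ∧ c < i + 2)).map (· - 1)).sort (· ≤ ·))).length + 1
            by rw [hJslen]]
        rw [List.drop_length_add_append 1, List.drop_one, List.tail_cons]
      rw [h1, h2]
      have hc3 : Multiset.map ((· + 1) ∘ (· - 1)) (m.filter (fun c => 0 < c ∧ c < i + 2))
          = Multiset.map id (m.filter (fun c => 0 < c ∧ c < i + 2)) := by
        refine Multiset.map_congr rfl fun c hc => ?_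
        rw [Multiset.mem_filter] at hc
        simp only [Function.comp_apply, id_eq]
        omega
      have h3 : (↑(((((m.filter (fun c => 0 < c ∧ c < i + 2)).map (· - 1)).sort (· ≤ ·))).map
            (· + 1)) : Multiset ℕ) = m.filter (fun c => 0 < c ∧ c < i + 2) := by
        rw [← Multiset.map_coe, Multiset.sort_eq, Multiset.map_map, hc3, Multiset.map_id]
      have hc4 : Multiset.map ((· + 2) ∘ (· - 2)) (m.filter (fun c => i + 2 ≤ c))
          = Multiset.map id (m.filter (fun c => i + 2 ≤ c)) := by
        refine Multiset.map_congr rfl fun c hc => ?_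
        rw [Multiset.mem_filter] at hc
        simp only [Function.comp_apply, id_eq]
        omega
      have h4 : (↑(((((m.filter (fun c => i + 2 ≤ c)).map (· - 2)).sort (· ≤ ·))).map
            (· + 2)) : Multiset ℕ) = m.filter (fun c => i + 2 ≤ c) := by
        rw [← Multiset.map_coe, Multiset.sort_eq, Multiset.map_map, hc4, Multiset.map_id]
      rw [h3, h4]
      have h6 : m.filter (fun c => c = 0) = Multiset.replicate (m.count 0) 0 :=
        Multiset.filter_eq' m 0
      have h7 : Multiset.card (m.filter (fun c => c = 0)) = m.count 0 := by
        rw [h6, Multiset.card_replicate]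
      have h5 : Multiset.replicate
          (r - (Multiset.card (m.filter (fun c => 0 < c ∧ c < i + 2))
            + Multiset.card (m.filter (fun c => i + 2 ≤ c)))) (0 : ℕ)
          = m.filter (fun c => c = 0) := by
        rw [h6]
        congr 1
        omega
      rw [h5]
      calc m.filter (fun c => c = 0) + m.filter (fun c => 0 < c ∧ c < i + 2)
            + m.filter (fun c => i + 2 ≤ c)
          = m.filter (fun c => 0 < c ∧ c < i + 2) + (m.filter (fun c => i + 2 ≤ c)
            + m.filter (fun c => c = 0)) := by abel
        _ = m := msplit i m
  have hright : ∀ q ∈ (Sset r).sigma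
      (fun p => mySym (Finset.range u.length) (p.1 + p.2 + 1)), fwd (bwd r q) = q := by
    rintro ⟨⟨a, b⟩, M⟩ hq
    simp only [Finset.mem_sigma, mem_Sset, mem_mySym, Finset.mem_range] at hq
    obtain ⟨hab, hcard, hmem⟩ := hq
    have hLs : (M.sort (· ≤ ·)).Pairwise (· ≤ ·) := Multiset.pairwise_sort _ _
    have hlen : (M.sort (· ≤ ·)).length = a + b + 1 := by
      rw [Multiset.length_sort, hcard]
    have halen : a < (M.sort (· ≤ ·)).length := by omega
    have hgetD : (M.sort (· ≤ ·)).getD a 0 = (M.sort (· ≤ ·))[a] :=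
      List.getD_eq_getElem _ _ halen
    have htake := mem_take_le' hLs halen
    have hdrop := mem_drop_ge' hLs halen
    simp only [fwd, bwd, hgetD]
    have hf1 : (Multiset.replicate (r - (a + b)) 0
          + (↑(((M.sort (· ≤ ·)).take a).map (· + 1)) : Multiset ℕ)
          + (↑(((M.sort (· ≤ ·)).drop (a + 1)).map (· + 2)) : Multiset ℕ)).filter
            (fun c => 0 < c ∧ c < (M.sort (· ≤ ·))[a] + 2)
        = (↑(((M.sort (· ≤ ·)).take a).map (· + 1)) : Multiset ℕ) := by
      rw [Multiset.filter_add, Multiset.filter_add]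
      rw [Multiset.filter_eq_nil.2 (fun c hc => by
        rw [Multiset.eq_of_mem_replicate hc]; omega)]
      rw [Multiset.filter_eq_self.2 (fun c hc => by
        rw [Multiset.mem_coe, List.mem_map] at hc
        obtain ⟨e, he, rfl⟩ := hc
        have := htake e he
        omega)]
      rw [Multiset.filter_eq_nil.2 (fun c hc => by
        rw [Multiset.mem_coe, List.mem_map] at hc
        obtain ⟨e, he, rfl⟩ := hc
        have := hdrop e he
        omega)]
      rw [zero_add, add_zero]
    have hf2 : (Multiset.replicate (r - (a + b)) 0
          + (↑(((M.sort (· ≤ ·)).take a).map (· + 1)) : Multiset ℕ)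
          + (↑(((M.sort (· ≤ ·)).drop (a + 1)).map (· + 2)) : Multiset ℕ)).filter
            (fun c => (M.sort (· ≤ ·))[a] + 2 ≤ c)
        = (↑(((M.sort (· ≤ ·)).drop (a + 1)).map (· + 2)) : Multiset ℕ) := by
      rw [Multiset.filter_add, Multiset.filter_add]
      rw [Multiset.filter_eq_nil.2 (fun c hc => by
        rw [Multiset.eq_of_mem_replicate hc]; omega)]
      rw [Multiset.filter_eq_nil.2 (fun c hc => by
        rw [Multiset.mem_coe, List.mem_map] at hc
        obtain ⟨e, he, rfl⟩ := hc
        have := htake e he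
        omega)]
      rw [Multiset.filter_eq_self.2 (fun c hc => by
        rw [Multiset.mem_coe, List.mem_map] at hc
        obtain ⟨e, he, rfl⟩ := hc
        have := hdrop e he
        omega)]
      rw [zero_add, zero_add]
    rw [hf1, hf2]
    have hmc1 : Multiset.map ((· - 1) ∘ (· + 1)) (↑((M.sort (· ≤ ·)).take a) : Multiset ℕ)
        = Multiset.map id (↑((M.sort (· ≤ ·)).take a) : Multiset ℕ) :=
      Multiset.map_congr rfl (fun c _ => by simp)
    have hm1 : ((↑(((M.sort (· ≤ ·)).take a).map (· + 1)) : Multiset ℕ)).map (· - 1)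
        = (↑((M.sort (· ≤ ·)).take a) : Multiset ℕ) := by
      rw [← Multiset.map_coe, Multiset.map_map, hmc1, Multiset.map_id]
    have hmc2 : Multiset.map ((· - 2) ∘ (· + 2)) (↑((M.sort (· ≤ ·)).drop (a + 1)) : Multiset ℕ)
        = Multiset.map id (↑((M.sort (· ≤ ·)).drop (a + 1)) : Multiset ℕ) :=
      Multiset.map_congr rfl (fun c _ => by simp)
    have hm2 : ((↑(((M.sort (· ≤ ·)).drop (a + 1)).map (· + 2)) : Multiset ℕ)).map (· - 2)
        = (↑((M.sort (· ≤ ·)).drop (a + 1)) : Multiset ℕ) := by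
      rw [← Multiset.map_coe, Multiset.map_map, hmc2, Multiset.map_id]
    have hcJ : Multiset.card ((↑(((M.sort (· ≤ ·)).take a).map (· + 1)) : Multiset ℕ).map (· - 1)) = a := by
      rw [hm1, Multiset.coe_card, List.length_take]
      omega
    have hcK : Multiset.card ((↑(((M.sort (· ≤ ·)).drop (a + 1)).map (· + 2)) : Multiset ℕ).map (· - 2)) = b := by
      rw [hm2, Multiset.coe_card, List.length_drop]
      omega
    refine sigma_mk_eq ?_ ?_
    · rw [hcJ, hcK]
    · rw [hm1, hm2]
      calc (M.sort (· ≤ ·))[a] ::ₘ ((↑((M.sort (· ≤ ·)).take a) : Multiset ℕ)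
            + (↑((M.sort (· ≤ ·)).drop (a + 1)) : Multiset ℕ))
          = (↑((M.sort (· ≤ ·)).take a) : Multiset ℕ)
            + ((M.sort (· ≤ ·))[a] ::ₘ (↑((M.sort (· ≤ ·)).drop (a + 1)) : Multiset ℕ)) :=
            (Multiset.add_cons _ _ _).symm
        _ = (↑((M.sort (· ≤ ·)).take a) : Multiset ℕ)
            + (↑((M.sort (· ≤ ·))[a] :: (M.sort (· ≤ ·)).drop (a + 1)) : Multiset ℕ) := by
            rw [Multiset.cons_coe]
        _ = (↑((M.sort (· ≤ ·)).take a ++ (M.sort (· ≤ ·))[a] :: (M.sort (· ≤ ·)).drop (a + 1))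
              : Multiset ℕ) := Multiset.coe_add _ _
        _ = (↑(M.sort (· ≤ ·)) : Multiset ℕ) := by
            rw [← List.drop_eq_getElem_cons halen, List.take_append_drop]
        _ = M := Multiset.sort_eq _ _
  have hval : ∀ q ∈ (Finset.range u.length).sigma
      (fun _ => mySym (Finset.range (u.length + 2)) r),
      Fval α β γ r u q = Gval α β γ u (fwd q) := by
    rintro ⟨i, m⟩ hq
    simp only [Finset.mem_sigma, Finset.mem_range, mem_mySym] at hq
    obtain ⟨hi, hcard, hmem⟩ := hq
    have hmlt : ∀ c ∈ m, c < u.length + 2 := hmem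
    have hr : Multiset.card (m.filter (fun c => 0 < c ∧ c < i + 2))
        + (Multiset.card (m.filter (fun c => i + 2 ≤ c))
        + Multiset.card (m.filter (fun c => c = 0))) = r := by
      rw [← Multiset.card_add, ← Multiset.card_add, msplit, hcard]
    have e1 : (m.filter (fun c => 0 < c ∧ c < i + 2)).map
          (fun c => (Rmap α β (i + 1) u).getD c 0)
        = (m.filter (fun c => 0 < c ∧ c < i + 2)).map
          (fun c => u.getD (c - 1) 0 + (u.getD i 0 - u.getD 0 0 + α)) := by
      refine Multiset.map_congr rfl fun c hc => ?_
      rw [Multiset.mem_filter] at hc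
      exact Rmap_getD_lo α β hi hc.2.1 hc.2.2
    have e2 : (m.filter (fun c => i + 2 ≤ c)).map
          (fun c => (Rmap α β (i + 1) u).getD c 0)
        = (m.filter (fun c => i + 2 ≤ c)).map
          (fun c => u.getD (c - 2) 0 + (u.getD i 0 - u.getD 0 0 + β)) := by
      refine Multiset.map_congr rfl fun c hc => ?_
      rw [Multiset.mem_filter] at hc
      exact Rmap_getD_hi α β hi hc.2 (hmlt c hc.1)
    have e3 : (m.filter (fun c => c = 0)).map
          (fun c => (Rmap α β (i + 1) u).getD c 0)
        = (m.filter (fun c => c = 0)).map (fun _ => u.getD i 0) := by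
      refine Multiset.map_congr rfl fun c hc => ?_
      rw [Multiset.mem_filter] at hc
      rw [hc.2]
      exact Rmap_getD_zero α β i u
    have hsum : m.map (fun c => (Rmap α β (i + 1) u).getD c 0)
        = (m.filter (fun c => 0 < c ∧ c < i + 2)).map
            (fun c => u.getD (c - 1) 0 + (u.getD i 0 - u.getD 0 0 + α))
          + ((m.filter (fun c => i + 2 ≤ c)).map
            (fun c => u.getD (c - 2) 0 + (u.getD i 0 - u.getD 0 0 + β))
          + (m.filter (fun c => c = 0)).map (fun _ => u.getD i 0)) := by
      conv_lhs => rw [← msplit i m]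
      rw [Multiset.map_add, Multiset.map_add, e1, e2, e3]
    have j1 : (m.filter (fun c => 0 < c ∧ c < i + 2)).map (fun c => u.getD (c - 1) 0)
        = ((m.filter (fun c => 0 < c ∧ c < i + 2)).map (· - 1)).map (fun j => u.getD j 0) := by
      rw [Multiset.map_map]
      rfl
    have j2 : (m.filter (fun c => i + 2 ≤ c)).map (fun c => u.getD (c - 2) 0)
        = ((m.filter (fun c => i + 2 ≤ c)).map (· - 2)).map (fun j => u.getD j 0) := by
      rw [Multiset.map_map]
      rfl
    simp only [Fval, Gval, fwd, Multiset.map_cons, Multiset.sum_cons, Multiset.map_add,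
      Multiset.sum_add, Multiset.card_map]
    rw [hsum, Multiset.sum_add, Multiset.sum_add]
    rw [sum_map_add_const _ (fun c => u.getD (c - 1) 0) _]
    rw [sum_map_add_const _ (fun c => u.getD (c - 2) 0) _]
    rw [j1, j2]
    rw [Multiset.map_const', Multiset.sum_replicate]
    rw [Rmap_getD_zero]
    have hrz : (r : ℤ) = (Multiset.card (m.filter (fun c => 0 < c ∧ c < i + 2)) : ℤ)
        + ((Multiset.card (m.filter (fun c => i + 2 ≤ c)) : ℤ)
        + (Multiset.card (m.filter (fun c => c = 0)) : ℤ)) := by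
      exact_mod_cast congrArg (Nat.cast : ℕ → ℤ) hr.symm
    rw [hrz]
    push_cast
    simp only [← natCast_zsmul]
    push_cast
    module
  refine Finset.sum_nbij' fwd (bwd r) hfwd hbwd hleft hright fun q hq => ?_
  exact congrArg (fun z => ({z} : Multiset A)) (hval q hq)

lemma bind_sum {ι : Type*} (X : Multiset (List A)) (s : Finset ι) (F : ι → List A → Multiset A) :
    X.bind (fun u => ∑ p ∈ s, F p u) = ∑ p ∈ s, X.bind (F p) := by
  induction X using Multiset.induction with
  | empty => simp
  | cons a X ih => simp [Multiset.cons_bind, ih, Finset.sum_add_distrib]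

end Aux

/-- if the additively extended statistics `f_γ^r` agree on two multisets `X, Y`
of sequences for all `r ≥ 0` and `γ ∈ A`, then for every `α, β ∈ A`, `r ≥ 0` and `γ ∈ A`,
(1) `f_γ^r(R_{α,β}(X)) = f_γ^r(R_{α,β}(Y))` and (2) `f_γ^r(R_{α,β}(X)) = f_γ^r(R_{β,α}(Y))`. -/
theorem fStat_RMulti_eq_of_fStat_eq {A : Type*} [AddCommGroup A] (X Y : Multiset (List A))
    (h : ∀ (r : ℕ) (γ : A), X.bind (fStat γ r) = Y.bind (fStat γ r))
    (α β : A) (r : ℕ) (γ : A) :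
    (X.bind (RMulti α β)).bind (fStat γ r) = (Y.bind (RMulti α β)).bind (fStat γ r) ∧
    (X.bind (RMulti α β)).bind (fStat γ r) = (Y.bind (RMulti β α)).bind (fStat γ r) := by
  have main : ∀ (α' β' : A) (Z : Multiset (List A)),
      (Z.bind (RMulti α' β')).bind (fStat γ r) =
        ∑ p ∈ Sset r, Z.bind (fStat (γ + p.1 • α' + p.2 • β') (p.1 + p.2 + 1)) := by
    intro α' β' Z
    rw [Multiset.bind_assoc]
    rw [show (fun u => (RMulti α' β' u).bind (fStat γ r)) =
        fun u => ∑ p ∈ Sset r, fStat (γ + p.1 • α' + p.2 • β') (p.1 + p.2 + 1) u from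
      funext (key α' β' γ r)]
    exact bind_sum Z _ _
  have swap_inv : ∀ p ∈ Sset r, Prod.swap p ∈ Sset r := by
    intro p hp; rw [mem_Sset] at hp ⊢
    simp only [Prod.fst_swap, Prod.snd_swap]; omega
  constructor
  · rw [main α β X, main α β Y]
    exact Finset.sum_congr rfl fun p _ => h _ _
  · rw [main α β X, main β α Y]
    rw [show (∑ p ∈ Sset r, X.bind (fStat (γ + p.1 • α + p.2 • β) (p.1 + p.2 + 1))) =
        ∑ p ∈ Sset r, Y.bind (fStat (γ + p.1 • α + p.2 • β) (p.1 + p.2 + 1)) from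
      Finset.sum_congr rfl fun p _ => h _ _]
    refine Finset.sum_nbij' Prod.swap Prod.swap swap_inv swap_inv
      (fun p _ => Prod.swap_swap p) (fun p _ => Prod.swap_swap p) ?_
    intro p _
    have h1 : γ + p.1 • α + p.2 • β = γ + p.2 • β + p.1 • α := by abel
    have h2 : p.1 + p.2 = p.2 + p.1 := by omega
    simp only [Prod.fst_swap, Prod.snd_swap]
    rw [h1, h2]
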